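/- Let H be a self-adjoint operator bounded below with discrete negative spectrum, V ≥ 0 a bounded nonnegative operator, and suppose 0 is not an eigenvalue of H. Then the number of nonpositive eigenvalues of H − V is at most the number of negative eigenvalues of H − 2V: N_{≤0}(H − V) ≤ N_-(H − 2V). -/

import Mathlib

open scoped InnerProductSpace

variable {E : Type*} [NormedAddCommGroup E] [InnerProductSpace ℝ E]

private lemma aux_quad (a c : ℝ) (h : ∀ t : ℝ, 2*t*a + t^2*c ≤ 0) : a = 0 := by
  have hc : c ≤ 0 := by have h1 := h 1; have h2 := h (-1); nlinarith
  have hpos : (0:ℝ) < 1 - c := by linarith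
  have h3 := h (a / (1 - c))
  have h4 : a ^ 2 * (2 - c) ≤ 0 := by
    have h5 : (2*(a/(1-c))*a + (a/(1-c))^2*c) * (1-c)^2 ≤ 0 :=
      mul_nonpos_of_nonpos_of_nonneg h3 (by positivity)
    calc a^2*(2-c) = (2*(a/(1-c))*a + (a/(1-c))^2*c) * (1-c)^2 := by
          field_simp; ring
      _ ≤ 0 := h5
  nlinarith [sq_nonneg a]

private lemma aux_quad' (a c : ℝ) (h : ∀ t : ℝ, 0 ≤ 2*t*a + t^2*c) : a = 0 := by
  have := aux_quad (-a) (-c) (fun t => by have := h t; linarith)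
  linarith

private lemma expand_symm (T : E →L[ℝ] E) (hT : ∀ u v : E, (inner ℝ (T u) v : ℝ) = inner ℝ u (T v))
    (u w : E) (t : ℝ) :
    (inner ℝ (T (u + t • w)) (u + t • w) : ℝ) =
      inner ℝ (T u) u + 2*t*(inner ℝ (T u) w : ℝ) + t^2 * (inner ℝ (T w) w : ℝ) := by
  have hsym : (inner ℝ (T w) u : ℝ) = inner ℝ (T u) w := by rw [hT w u, real_inner_comm]
  simp only [map_add, map_smul, inner_add_left, inner_add_right, real_inner_smul_left,
    real_inner_smul_right]
  rw [hsym]; ring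

private lemma expand_sub (T : E →L[ℝ] E) (x y : E) (t : ℝ) :
    (inner ℝ (T (x - t • y)) (x - t • y) : ℝ) =
      inner ℝ (T x) x - t * (inner ℝ (T x) y : ℝ) - t * (inner ℝ (T y) x : ℝ)
        + t^2 * (inner ℝ (T y) y : ℝ) := by
  simp only [map_sub, map_smul, inner_sub_left, inner_sub_right, real_inner_smul_left,
    real_inner_smul_right]
  ring

private lemma V_null (V : E →L[ℝ] E) (hV : ∀ u v : E, (inner ℝ (V u) v : ℝ) = inner ℝ u (V v))
    (hVpos : ∀ u : E, 0 ≤ (inner ℝ (V u) u : ℝ)) {u : E} (h : (inner ℝ (V u) u : ℝ) = 0) :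
    V u = 0 := by
  have key : ∀ y : E, (inner ℝ (V u) y : ℝ) = 0 := by
    intro y
    apply aux_quad' _ (inner ℝ (V y) y)
    intro t
    have h2 := hVpos (u + t • y)
    rw [expand_symm V hV, h] at h2
    linarith
  have := key (V u)
  exact inner_self_eq_zero.mp this

private lemma radical (T : E →L[ℝ] E) (hT : ∀ u v : E, (inner ℝ (T u) v : ℝ) = inner ℝ u (T v))
    {W : Submodule ℝ E} (hW : ∀ u ∈ W, (inner ℝ (T u) u : ℝ) ≤ 0) {u : E} (hu : u ∈ W)
    (h0 : (inner ℝ (T u) u : ℝ) = 0) {w : E} (hw : w ∈ W) : (inner ℝ (T u) w : ℝ) = 0 := by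
  apply aux_quad _ (inner ℝ (T w) w)
  intro t
  have h2 := hW (u + t • w) (W.add_mem hu (W.smul_mem t hw))
  rw [expand_symm T hT] at h2
  linarith

set_option maxHeartbeats 1000000

/-- The number of negative eigenvalues (dimension of the spectral subspace of `(−∞,0)`),
via Glazman's variational characterization: the supremum of dimensions of subspaces on
which the quadratic form is negative definite. -/
noncomputable def negCount (T : E →L[ℝ] E) : Cardinal :=
  ⨆ W : {W : Submodule ℝ E // ∀ u ∈ W, u ≠ 0 → (inner ℝ (T u) u : ℝ) < 0},
    Module.rank ℝ W.1

/-- The number of nonpositive eigenvalues (dimension of the spectral subspace of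
`(−∞,0]`), via the variational characterization. -/
noncomputable def nonposCount (T : E →L[ℝ] E) : Cardinal :=
  ⨆ W : {W : Submodule ℝ E // ∀ u ∈ W, (inner ℝ (T u) u : ℝ) ≤ 0},
    Module.rank ℝ W.1

/-- If `H` is self-adjoint with `0` not an eigenvalue and `V ≥ 0`, then
`N_{≤0}(H − V) ≤ N_-(H − 2V)`. -/
theorem stmt5 (H V : E →L[ℝ] E)
    (hH : ∀ u v : E, (inner ℝ (H u) v : ℝ) = inner ℝ u (H v))
    (hV : ∀ u v : E, (inner ℝ (V u) v : ℝ) = inner ℝ u (V v))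
    (hVpos : ∀ u : E, 0 ≤ (inner ℝ (V u) u : ℝ))
    (hker : ∀ u : E, H u = 0 → u = 0) :
    nonposCount (H - V) ≤ negCount (H - (2:ℝ) • V) := by
  classical
  set A := H - V with hAdef
  set B := H - (2:ℝ) • V with hBdef
  have hAapp : ∀ u : E, A u = H u - V u := fun u => rfl
  have hBapp : ∀ u : E, B u = H u - (2:ℝ) • V u := fun u => rfl
  have hA_symm : ∀ u v : E, (inner ℝ (A u) v : ℝ) = inner ℝ u (A v) := by
    intro u v
    simp only [hAapp, inner_sub_left, inner_sub_right, hH, hV]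
  have hB_symm : ∀ u v : E, (inner ℝ (B u) v : ℝ) = inner ℝ u (B v) := by
    intro u v
    simp only [hBapp, inner_sub_left, inner_sub_right, real_inner_smul_left,
      real_inner_smul_right, hH, hV]
  have hAval : ∀ u v : E, (inner ℝ (A u) v : ℝ) = inner ℝ (H u) v - inner ℝ (V u) v := by
    intro u v; rw [hAapp, inner_sub_left]
  have hBval : ∀ u v : E, (inner ℝ (B u) v : ℝ) = inner ℝ (H u) v - 2 * inner ℝ (V u) v := by
    intro u v; rw [hBapp, inner_sub_left, real_inner_smul_left]
  -- upper bound machinery for negCount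
  have bdd : BddAbove (Set.range fun (X : {X : Submodule ℝ E // ∀ u ∈ X, u ≠ 0 →
      (inner ℝ (B u) u : ℝ) < 0}) => Module.rank ℝ X.1) := by
    refine ⟨Module.rank ℝ E, ?_⟩
    rintro x ⟨y, rfl⟩
    exact Submodule.rank_le y.1
  have hle : ∀ (W' : Submodule ℝ E), (∀ u ∈ W', u ≠ 0 → (inner ℝ (B u) u : ℝ) < 0) →
      Module.rank ℝ W' ≤ negCount B := fun W' h =>
    le_ciSup bdd (⟨W', h⟩ : {X : Submodule ℝ E // ∀ u ∈ X, u ≠ 0 → (inner ℝ (B u) u : ℝ) < 0})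
  rw [nonposCount]
  refine ciSup_le' ?_
  rintro ⟨W, hW⟩
  show Module.rank ℝ W ≤ negCount B
  -- the "kernel" part N₀
  set N₀ : Submodule ℝ E :=
    { carrier := {u | u ∈ W ∧ V u = 0 ∧ ∀ w ∈ W, (inner ℝ (A u) w : ℝ) = 0}
      add_mem' := by
        rintro a b ⟨haW, haV, haA⟩ ⟨hbW, hbV, hbA⟩
        refine ⟨W.add_mem haW hbW, by rw [map_add, haV, hbV, add_zero], fun w hw => ?_⟩
        rw [map_add, inner_add_left, haA w hw, hbA w hw, add_zero]
      zero_mem' := ⟨W.zero_mem, map_zero V, fun w hw => by simp⟩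
      smul_mem' := by
        rintro c a ⟨haW, haV, haA⟩
        refine ⟨W.smul_mem c haW, by rw [map_smul, haV, smul_zero], fun w hw => ?_⟩
        rw [map_smul, real_inner_smul_left, haA w hw, mul_zero] } with hN₀def
  have hN₀mem : ∀ u : E, u ∈ N₀ ↔
      (u ∈ W ∧ V u = 0 ∧ ∀ w ∈ W, (inner ℝ (A u) w : ℝ) = 0) := fun u => Iff.rfl
  have hN₀W : N₀ ≤ W := fun u hu => ((hN₀mem u).1 hu).1
  have hmem : ∀ u ∈ W, 0 ≤ (inner ℝ (B u) u : ℝ) → u ∈ N₀ := by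
    intro u hu hBu
    have h1 := hW u hu
    have h2 := hVpos u
    rw [hAval] at h1
    rw [hBval] at hBu
    have hVu : (inner ℝ (V u) u : ℝ) = 0 := by linarith
    have hAu : (inner ℝ (A u) u : ℝ) = 0 := by rw [hAval]; linarith
    exact (hN₀mem u).2 ⟨hu, V_null V hV hVpos hVu,
      fun w hw => radical A hA_symm hW hu hAu hw⟩
  have hstrict : ∀ u ∈ W, u ∉ N₀ → (inner ℝ (B u) u : ℝ) < 0 := by
    intro u hu hnot
    by_contra h
    exact hnot (hmem u hu (not_lt.1 h))
  -- for φ ∈ N₀ the B-inner products reduce to H-inner products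
  have hBφx : ∀ φ ∈ N₀, ∀ x : E, (inner ℝ (B φ) x : ℝ) = inner ℝ (H φ) x := by
    intro φ hφ x
    rw [hBval, ((hN₀mem φ).1 hφ).2.1, inner_zero_left, mul_zero, sub_zero]
  have hBcross0 : ∀ φ ∈ N₀, ∀ w ∈ W, (inner ℝ (B φ) w : ℝ) = 0 := by
    intro φ hφ w hw
    obtain ⟨hφW, hφV, hφA⟩ := (hN₀mem φ).1 hφ
    rw [hBφx φ hφ]
    have := hφA w hw
    rw [hAval, hφV, inner_zero_left, sub_zero] at this
    exact this
  have hHφφ : ∀ φ ∈ N₀, (inner ℝ (H φ) φ : ℝ) = 0 := by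
    intro φ hφ
    rw [← hBφx φ hφ]
    exact hBcross0 φ hφ φ (hN₀W hφ)
  -- the perturbation map
  set t : ℝ := (1 + ‖B‖)⁻¹ with htdef
  have htpos : 0 < t := by positivity
  have htB : t * ‖B‖ < 2 := by
    rw [htdef, inv_mul_eq_div]
    rw [div_lt_iff₀ (by positivity)]
    nlinarith [norm_nonneg B]
  set L : E →ₗ[ℝ] E := LinearMap.id - t • (H : E →ₗ[ℝ] E) with hLdef
  have hLapp : ∀ x : E, L x = x - t • H x := fun x => rfl
  set M : Submodule ℝ E := N₀.map L with hMdef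
  have hMkey : ∀ φ ∈ N₀, φ ≠ 0 → (inner ℝ (B (L φ)) (L φ) : ℝ) < 0 := by
    intro φ hφ hne
    have hHφ : H φ ≠ 0 := fun h => hne (hker φ h)
    have hnorm : 0 < ‖H φ‖ := norm_pos_iff.2 hHφ
    rw [hLapp, expand_sub]
    have e1 : (inner ℝ (B φ) φ : ℝ) = 0 := hBcross0 φ hφ φ (hN₀W hφ)
    have e2 : (inner ℝ (B φ) (H φ) : ℝ) = ‖H φ‖^2 := by
      rw [hBφx φ hφ, real_inner_self_eq_norm_sq]
    have e3 : (inner ℝ (B (H φ)) φ : ℝ) = ‖H φ‖^2 := by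
      rw [hB_symm, real_inner_comm, e2]
    have e4 : (inner ℝ (B (H φ)) (H φ) : ℝ) ≤ ‖B‖ * ‖H φ‖^2 := by
      calc (inner ℝ (B (H φ)) (H φ) : ℝ) ≤ ‖B (H φ)‖ * ‖H φ‖ := real_inner_le_norm _ _
        _ ≤ (‖B‖ * ‖H φ‖) * ‖H φ‖ := by
            exact mul_le_mul_of_nonneg_right (B.le_opNorm _) (norm_nonneg _)
        _ = ‖B‖ * ‖H φ‖^2 := by ring
    rw [e1, e2, e3]
    have : t^2 * (inner ℝ (B (H φ)) (H φ) : ℝ) ≤ t^2 * (‖B‖ * ‖H φ‖^2) :=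
      mul_le_mul_of_nonneg_left e4 (by positivity)
    nlinarith [sq_nonneg ‖H φ‖, mul_pos (mul_pos htpos hnorm) hnorm]
  have hMstrict : ∀ ψ ∈ M, ψ ≠ 0 → (inner ℝ (B ψ) ψ : ℝ) < 0 := by
    rintro ψ hψ hne
    obtain ⟨φ, hφ, rfl⟩ := hψ
    refine hMkey φ hφ ?_
    rintro rfl
    exact hne (map_zero L)
  have hMnonpos : ∀ ψ ∈ M, (inner ℝ (B ψ) ψ : ℝ) ≤ 0 := by
    intro ψ hψ
    by_cases h : ψ = 0
    · simp [h]
    · exact le_of_lt (hMstrict ψ hψ h)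
  have hMrank : Module.rank ℝ N₀ ≤ Module.rank ℝ M := by
    set g : N₀ →ₗ[ℝ] E := L.comp N₀.subtype with hgdef
    have hginj : Function.Injective g := by
      intro x y hxy
      have hsub : L (x.1 - y.1) = 0 := by
        rw [map_sub]
        simpa [hgdef] using sub_eq_zero.2 hxy
      by_contra hne
      have hne' : x.1 - y.1 ≠ 0 := fun h => hne (Subtype.ext (sub_eq_zero.1 h))
      have hmem' : x.1 - y.1 ∈ N₀ := N₀.sub_mem x.2 y.2
      have := hMkey _ hmem' hne'
      rw [hsub] at this
      simp at this
    have hrange : LinearMap.range g = M := by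
      rw [hgdef, LinearMap.range_comp, Submodule.range_subtype]
    have heq : Module.rank ℝ N₀ = Module.rank ℝ (LinearMap.range g) :=
      (LinearEquiv.ofInjective g hginj).rank_eq
    rw [heq, hrange]
  -- complement machinery, case split on finite-dimensionality of N₀
  by_cases hfin : FiniteDimensional ℝ ↥N₀
  · -- finite-dimensional N₀ : build a combined subspace U ⊔ M
    haveI := hfin
    set U : Submodule ℝ E :=
      { carrier := {v | v ∈ W ∧ ∀ ψ ∈ N₀, (inner ℝ (B v) (H ψ) : ℝ) = 0}
        add_mem' := by
          rintro a b ⟨haW, ha⟩ ⟨hbW, hb⟩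
          refine ⟨W.add_mem haW hbW, fun ψ hψ => ?_⟩
          rw [map_add, inner_add_left, ha ψ hψ, hb ψ hψ, add_zero]
        zero_mem' := ⟨W.zero_mem, fun ψ hψ => by simp⟩
        smul_mem' := by
          rintro c a ⟨haW, ha⟩
          refine ⟨W.smul_mem c haW, fun ψ hψ => ?_⟩
          rw [map_smul, real_inner_smul_left, ha ψ hψ, mul_zero] } with hUdef
    have hUmem : ∀ v : E, v ∈ U ↔ (v ∈ W ∧ ∀ ψ ∈ N₀, (inner ℝ (B v) (H ψ) : ℝ) = 0) :=
      fun v => Iff.rfl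
    have hUW : U ≤ W := fun v hv => ((hUmem v).1 hv).1
    have hUN₀ : ∀ v, v ∈ U → v ∈ N₀ → v = 0 := by
      intro v hvU hvN
      have h1 := ((hUmem v).1 hvU).2 v hvN
      rw [hBφx v hvN] at h1
      exact hker v (inner_self_eq_zero.mp h1)
    have hUstrict : ∀ v ∈ U, v ≠ 0 → (inner ℝ (B v) v : ℝ) < 0 := by
      intro v hv hne
      exact hstrict v (hUW hv) (fun hvN => hne (hUN₀ v hv hvN))
    -- the positive-definite form φ ψ ↦ ⟪Hφ, Hψ⟫ on N₀ gives a bijection to the dual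
    set T : ↥N₀ →ₗ[ℝ] Module.Dual ℝ ↥N₀ := LinearMap.mk₂ ℝ
        (fun φ ψ : ↥N₀ => (inner ℝ (H φ.1) (H ψ.1) : ℝ))
        (by intros m₁ m₂ n; simp [inner_add_left])
        (by intros c m n; simp [real_inner_smul_left])
        (by intros m n₁ n₂; simp [inner_add_right])
        (by intros c m n; simp [real_inner_smul_right]) with hTdef
    have hTapp : ∀ φ ψ : ↥N₀, T φ ψ = (inner ℝ (H φ.1) (H ψ.1) : ℝ) := fun φ ψ => rfl
    have hTker : ∀ z : ↥N₀, T z = 0 → z = 0 := by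
      intro z hz
      have h1 : (inner ℝ (H z.1) (H z.1) : ℝ) = 0 := by
        have := congrArg (fun f => f z) hz
        simpa [hTapp] using this
      exact Subtype.ext (hker z.1 (inner_self_eq_zero.mp h1))
    have hTinj : Function.Injective T := by
      intro x y hxy
      have := hTker (x - y) (by rw [map_sub, hxy, sub_self])
      exact sub_eq_zero.1 (by exact_mod_cast this)
    have hTsurj : Function.Surjective T :=
      (LinearMap.injective_iff_surjective_of_finrank_eq_finrank
        (Subspace.dual_finrank_eq (K := ℝ) (V := ↥N₀)).symm).1 hTinj
    have hsup : U ⊔ N₀ = W := by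
      refine le_antisymm (sup_le hUW hN₀W) ?_
      intro w hw
      set gw : Module.Dual ℝ ↥N₀ :=
        { toFun := fun ψ => (inner ℝ (B w) (H ψ.1) : ℝ)
          map_add' := by intros; simp [inner_add_right]
          map_smul' := by intros; simp [real_inner_smul_right] } with hgwdef
      obtain ⟨φ, hφ⟩ := hTsurj gw
      have hφval : ∀ ψ : ↥N₀, (inner ℝ (H φ.1) (H ψ.1) : ℝ) = inner ℝ (B w) (H ψ.1) :=
        fun ψ => congrArg (fun f => f ψ) hφ
      have hvU : w - φ.1 ∈ U := by
        refine (hUmem _).2 ⟨W.sub_mem hw (hN₀W φ.2), fun ψ hψ => ?_⟩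
        rw [map_sub, inner_sub_left, hBφx φ.1 φ.2, hφval ⟨ψ, hψ⟩, sub_self]
      have hdecomp : w = (w - φ.1) + φ.1 := (sub_add_cancel w φ.1).symm
      rw [hdecomp]
      exact Submodule.add_mem_sup hvU φ.2
    have hcross : ∀ v ∈ U, ∀ ψ ∈ M, (inner ℝ (B v) ψ : ℝ) = 0 := by
      rintro v hv ψ ⟨φ, hφ, rfl⟩
      rw [hLapp, inner_sub_right, real_inner_smul_right]
      have h1 : (inner ℝ (B v) φ : ℝ) = 0 := by
        rw [hB_symm, real_inner_comm]
        exact hBcross0 φ hφ v (hUW hv)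
      rw [h1, ((hUmem v).1 hv).2 φ hφ, mul_zero, sub_zero]
    have hUM : ∀ x, x ∈ U → x ∈ M → x = 0 := by
      intro x hxU hxM
      by_contra hne
      have h1 := hMstrict x hxM hne
      rw [hcross x hxU x hxM] at h1
      exact lt_irrefl 0 h1
    have hW'strict : ∀ u ∈ U ⊔ M, u ≠ 0 → (inner ℝ (B u) u : ℝ) < 0 := by
      intro u hu hne
      obtain ⟨v, hv, ψ, hψ, rfl⟩ := Submodule.mem_sup.1 hu
      have hc1 := hcross v hv ψ hψ
      have hc2 : (inner ℝ (B ψ) v : ℝ) = 0 := by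
        rw [hB_symm, real_inner_comm]; exact hc1
      have hexp : (inner ℝ (B (v + ψ)) (v + ψ) : ℝ) = inner ℝ (B v) v + inner ℝ (B ψ) ψ := by
        rw [map_add, inner_add_left, inner_add_right, inner_add_right, hc1, hc2]; ring
      rw [hexp]
      have hψ0 := hMnonpos ψ hψ
      rcases eq_or_ne v 0 with rfl | hvne
      · rcases eq_or_ne ψ 0 with rfl | hψne
        · exact absurd (by simp) hne
        · have := hMstrict ψ hψ hψne
          simpa using this
      · have hv0 := hUstrict v hv hvne
        linarith
    have hdisjUM : U ⊓ M = ⊥ := by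
      rw [eq_bot_iff]; intro x hx
      exact (Submodule.mem_bot ℝ).2 (hUM x hx.1 hx.2)
    have hdisjUN : U ⊓ N₀ = ⊥ := by
      rw [eq_bot_iff]; intro x hx
      exact (Submodule.mem_bot ℝ).2 (hUN₀ x hx.1 hx.2)
    have r2 := Submodule.rank_sup_add_rank_inf_eq U N₀
    have r3 := Submodule.rank_sup_add_rank_inf_eq U M
    rw [hdisjUN, rank_bot, add_zero, hsup] at r2
    rw [hdisjUM, rank_bot, add_zero] at r3
    calc Module.rank ℝ W = Module.rank ℝ U + Module.rank ℝ N₀ := r2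
      _ ≤ Module.rank ℝ U + Module.rank ℝ M := add_le_add_right hMrank _
      _ = Module.rank ℝ ↥(U ⊔ M) := r3.symm
      _ ≤ negCount B := hle _ hW'strict
  · -- infinite-dimensional N₀ : cardinal arithmetic
    obtain ⟨C, hC⟩ := Submodule.exists_isCompl N₀
    set U : Submodule ℝ E := C ⊓ W with hUdef
    have hUW : U ≤ W := inf_le_right
    have hUN₀ : ∀ v, v ∈ U → v ∈ N₀ → v = 0 := by
      intro v hvU hvN
      exact Submodule.disjoint_def.1 hC.disjoint v hvN hvU.1
    have hUstrict : ∀ v ∈ U, v ≠ 0 → (inner ℝ (B v) v : ℝ) < 0 := by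
      intro v hv hne
      exact hstrict v (hUW hv) (fun hvN => hne (hUN₀ v hv hvN))
    have hsup' : W ≤ U ⊔ N₀ := by
      intro w hw
      have hmemtop : w ∈ N₀ ⊔ C := by rw [hC.sup_eq_top]; exact Submodule.mem_top
      obtain ⟨y, hy, z, hz, rfl⟩ := Submodule.mem_sup.1 hmemtop
      have hzW : z ∈ W := by
        have := W.sub_mem hw (hN₀W hy)
        simpa using this
      exact Submodule.add_mem _ (Submodule.mem_sup_right hy)
        (Submodule.mem_sup_left ⟨hz, hzW⟩)
    have r2 := Submodule.rank_sup_add_rank_inf_eq U N₀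
    have hr : Module.rank ℝ W ≤ Module.rank ℝ U + Module.rank ℝ N₀ := by
      calc Module.rank ℝ W ≤ Module.rank ℝ ↥(U ⊔ N₀) := Submodule.rank_mono hsup'
        _ ≤ Module.rank ℝ ↥(U ⊔ N₀) + Module.rank ℝ ↥(U ⊓ N₀) := self_le_add_right _ _
        _ = Module.rank ℝ U + Module.rank ℝ N₀ := r2
    have hN₀neg : Module.rank ℝ N₀ ≤ negCount B := hMrank.trans (hle M hMstrict)
    have hℵ : Cardinal.aleph0 ≤ negCount B := by
      refine le_trans ?_ hN₀neg
      by_contra h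
      exact hfin (IsNoetherian.iff_fg.1 (IsNoetherian.iff_rank_lt_aleph0.2 (not_le.1 h)))
    exact hr.trans (Cardinal.add_le_of_le hℵ (hle U hUstrict) hN₀neg)
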